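/- Let A_Γ be a T-algebra with the ScP. If ⟨x_n : n ∈ ℕ⟩ is an injective sequence in X(Γ) that converges in the Stone topology to a point z ∈ X(Γ), then λ_z < ω₁, i.e., z ∈ X(Γ,ℵ₀). -/

import Mathlib

open Set

noncomputable section

/-- The least uncountable ordinal `ω₁`. -/
def omega1 : Ordinal := (Cardinal.aleph 1).ord

/-- `⋃_{γ ∈ F} a_γ` for a finite set `F` of indices. -/
def unionFin (a : Ordinal → Set ℕ) (F : Finset Ordinal) : Set ℕ :=
  ⋃ γ ∈ F, a γ

/-- A sequence of subsets of `ℕ`, with indices from a (downward closed) domain `D`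
of ordinals, is coherent if for all `α ≤ β` in the domain there is a finite `F ⊆ α`
with `a α ∩ a β ⊆ ⋃_{γ∈F} a γ` or `a α ⊆ a β ∪ ⋃_{γ∈F} a γ`. -/
def CoherentOn (D : Set Ordinal) (a : Ordinal → Set ℕ) : Prop :=
  ∀ α β : Ordinal, α ≤ β → β ∈ D →
    ∃ F : Finset Ordinal, (∀ γ ∈ F, γ < α) ∧
      (a α ∩ a β ⊆ unionFin a F ∨ a α ⊆ a β ∪ unionFin a F)

/-- Properness: no `a β` is contained in a finite union of earlier terms. -/
def ProperOn (D : Set Ordinal) (a : Ordinal → Set ℕ) : Prop :=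
  ∀ β ∈ D, ∀ F : Finset Ordinal, (∀ γ ∈ F, γ < β) → ¬ a β ⊆ unionFin a F

/-- `â_β = { α ≤ β : a α ∖ a β ⊆ ⋃_{γ∈F} a γ for some finite F ⊆ α }`. -/
def hatA (a : Ordinal → Set ℕ) (β : Ordinal) : Set Ordinal :=
  { α | α ≤ β ∧ ∃ F : Finset Ordinal, (∀ γ ∈ F, γ < α) ∧ a α \ a β ⊆ unionFin a F }

/-- The topology `τ(A)` on `λ + 1 = {α : α ≤ λ}` generated by the subbase
consisting of the sets `â_β` and their complements, `β < λ`. -/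
def tau (lam : Ordinal) (a : Ordinal → Set ℕ) :
    TopologicalSpace {α : Ordinal // α ≤ lam} :=
  TopologicalSpace.generateFrom
    { s | ∃ β < lam, s = {x : {α : Ordinal // α ≤ lam} | x.1 ∈ hatA a β} ∨
                     s = {x : {α : Ordinal // α ≤ lam} | x.1 ∈ hatA a β}ᶜ }

/-- The subspace `ω₁ = {α : α < ω₁}` of `(ω₁+1, τ(A))`. -/
def tauSub (a : Ordinal → Set ℕ) : TopologicalSpace {y : Ordinal // y < omega1} :=
  TopologicalSpace.induced
    (fun y : {y : Ordinal // y < omega1} => (⟨y.1, y.2.le⟩ : {α : Ordinal // α ≤ omega1}))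
    (tau omega1 a)

/-- Closed unbounded subsets of `ω₁`. -/
def IsClubOmega1 (C : Set Ordinal) : Prop :=
  C ⊆ Iio omega1 ∧
  (∀ α < omega1, ∃ β ∈ C, α ≤ β) ∧
  (∀ δ, δ < omega1 → δ ≠ 0 → (∀ α < δ, ∃ β ∈ C, α < β ∧ β < δ) → δ ∈ C)

/-- Stationary subsets of `ω₁`: sets meeting every club. -/
def IsStationaryOmega1 (S : Set Ordinal) : Prop :=
  ∀ C : Set Ordinal, IsClubOmega1 C → (S ∩ C).Nonempty

/-- The stationary covering property for a coherent sequence whose index domain is `D`: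
if the sequence has length `ω₁` (i.e. `Iio ω₁ ⊆ D`), then every stationary `S ⊆ ω₁`
together with some finite `F` covers, i.e. `⋃_{γ ∈ S ∪ F} â_γ = ω₁`.  (Sequences of
length `< ω₁` have the ScP by convention.) -/
def HasScP (D : Set Ordinal) (a : Ordinal → Set ℕ) : Prop :=
  Iio omega1 ⊆ D →
    ∀ S : Set Ordinal, S ⊆ Iio omega1 → IsStationaryOmega1 S →
      ∃ F : Finset Ordinal, (⋃ γ ∈ S ∪ (↑F : Set Ordinal), hatA a γ) = Iio omega1

/-- A node of the tree `2^{≤ω₁}`: a function `val` defined on the ordinals `< len`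
(with the canonical value `false` beyond `len`). -/
structure Node where
  len : Ordinal
  val : Ordinal → Bool
  canon : ∀ α, len ≤ α → val α = false

open Classical in
/-- The restriction `x ↾ β`. -/
def Node.restrict (x : Node) (β : Ordinal) : Node where
  len := β
  val := fun α => if α < β then x.val α else false
  canon := fun α h => if_neg (not_lt.2 h)

/-- `τ.Extends σ` means `σ ⊆ τ`, i.e. `τ` extends `σ`. -/
def Node.Extends (τ σ : Node) : Prop :=
  σ.len ≤ τ.len ∧ ∀ α < σ.len, τ.val α = σ.val α

/-- Successor ordinals. -/
def IsSucc (o : Ordinal) : Prop := ∃ β, o = β + 1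

open Classical in
/-- `σ†`: if `σ` has successor length `β+1`, the node agreeing with `σ` except at `β`;
otherwise `σ` itself. -/
def Node.dagger (σ : Node) : Node :=
  if h : IsSucc σ.len then
    { len := σ.len
      val := fun α => if α = Classical.choose h then !(σ.val α) else σ.val α
      canon := by
        intro α hα
        have hs := Classical.choose_spec h
        have hne : α ≠ Classical.choose h := by
          intro he
          rw [hs, he] at hα
          rw [Ordinal.add_one_eq_succ] at hα
          exact not_le.2 (Order.lt_succ (Classical.choose h)) hα
        show (if α = Classical.choose h then !(σ.val α) else σ.val α) = false
        rw [if_neg hne]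
        exact σ.canon α hα }
  else σ

open Classical in
/-- `σ ⌢ b` : the node `σ` extended by one value `b`. -/
def Node.snoc (σ : Node) (b : Bool) : Node where
  len := σ.len + 1
  val := fun α => if α = σ.len then b else σ.val α
  canon := by
    intro α hα
    have h1 : σ.len < α := by
      have h2 : σ.len < σ.len + 1 := by
        rw [Ordinal.add_one_eq_succ]; exact Order.lt_succ σ.len
      exact lt_of_lt_of_le h2 hα
    show (if α = σ.len then b else σ.val α) = false
    rw [if_neg h1.ne']
    exact σ.canon α h1.le

open Classical in
/-- `x ⌢ σ` : concatenation of nodes. -/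
def Node.append (x σ : Node) : Node where
  len := x.len + σ.len
  val := fun α => if α < x.len then x.val α else σ.val (α - x.len)
  canon := by
    intro α hα
    have h1 : ¬ α < x.len := not_lt.2 (le_trans (le_add_of_nonneg_right (zero_le (a := σ.len))) hα)
    show (if α < x.len then x.val α else σ.val (α - x.len)) = false
    rw [if_neg h1]
    apply σ.canon
    by_contra h2
    rw [not_le] at h2
    have h3 : α ≤ x.len + (α - x.len) := Ordinal.le_add_sub α x.len
    have h4 : x.len + (α - x.len) < x.len + σ.len := (add_lt_add_iff_left x.len).2 h2
    exact absurd hα (not_le.2 (lt_of_le_of_lt h3 h4))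

/-- A subtree of `2^{<ω₁}` that is downward closed, twinned and has no maximal elements. -/
structure GoodTree (Γ : Set Node) : Prop where
  lt_omega1 : ∀ σ ∈ Γ, σ.len < omega1
  downward : ∀ σ ∈ Γ, ∀ β ≤ σ.len, σ.restrict β ∈ Γ
  twinned : ∀ σ ∈ Γ, σ.dagger ∈ Γ
  noMax : ∀ σ ∈ Γ, ∃ τ ∈ Γ, σ.len < τ.len ∧ τ.Extends σ

/-- `X(Γ)`: the maximal branches of `Γ`, i.e. the minimal elements of `2^{≤ω₁} ∖ Γ`. -/
def XGamma (Γ : Set Node) : Set Node :=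
  { x | x.len ≤ omega1 ∧ x ∉ Γ ∧ ∀ β < x.len, x.restrict β ∈ Γ }

/-- The index domain of the branch sequence `A_{Γ,x}`. -/
def branchDomain (Γ : Set Node) (x : Node) : Set Ordinal :=
  { α | α + 1 ≤ x.len ∧ x.restrict (α + 1) ∈ Γ }

/-- The branch sequence `A_{Γ,x}`, `a^x_α = a_{x ↾ (α+1)}`. -/
def branchSeq (a : Node → Set ℕ) (x : Node) : Ordinal → Set ℕ :=
  fun α => a (x.restrict (α + 1))

/-- A `𝕋`-algebra on the tree `Γ`. -/
structure IsTAlgebra (Γ : Set Node) (a : Node → Set ℕ) : Prop where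
  tree : GoodTree Γ
  empty_of_not_succ : ∀ σ ∈ Γ, ¬ IsSucc σ.len → a σ = ∅
  compl_dagger : ∀ σ ∈ Γ, IsSucc σ.len → a σ.dagger = (a σ)ᶜ
  branch_coherent : ∀ x : Node, x.len ≤ omega1 →
    CoherentOn (branchDomain Γ x) (branchSeq a x)
  branch_proper : ∀ x : Node, x.len ≤ omega1 →
    ProperOn (branchDomain Γ x) (branchSeq a x)

/-- The Boolean subalgebra of `P(ℕ)` generated by a family `G`. -/
inductive GenBool (G : Set (Set ℕ)) : Set ℕ → Prop
  | basic (s : Set ℕ) : s ∈ G → GenBool G s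
  | empty : GenBool G ∅
  | compl (s : Set ℕ) : GenBool G s → GenBool G sᶜ
  | inter (s t : Set ℕ) : GenBool G s → GenBool G t → GenBool G (s ∩ t)

/-- `B_Γ`: the Boolean subalgebra of `P(ℕ)` generated by `{a_σ : σ ∈ Γ}`. -/
def BGamma (Γ : Set Node) (a : Node → Set ℕ) : Set (Set ℕ) :=
  { b | GenBool { s | ∃ σ ∈ Γ, s = a σ } b }

/-- A finite intersection from the family `{ℕ ∖ a_{x↾(α+1)} : α + 1 ≤ λ_x}`. -/
def finInterCompl (a : Node → Set ℕ) (x : Node) (F : Finset Ordinal) : Set ℕ :=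
  ⋂ α ∈ F, (a (x.restrict (α + 1)))ᶜ

/-- The ultrafilter `U_x` on `B_Γ` generated by the finite intersections of
`{ℕ ∖ a_{x↾(α+1)} : α + 1 ≤ λ_x}`. -/
def Ux (Γ : Set Node) (a : Node → Set ℕ) (x : Node) : Set (Set ℕ) :=
  { b | b ∈ BGamma Γ a ∧
    ∃ F : Finset Ordinal, (∀ α ∈ F, α + 1 ≤ x.len) ∧ finInterCompl a x F ⊆ b }

/-- The Stone topology on `X(Γ)`, with subbasic open sets `{z : b ∈ U_z}`, `b ∈ B_Γ`. -/
def stoneTop (Γ : Set Node) (a : Node → Set ℕ) :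
    TopologicalSpace {z : Node // z ∈ XGamma Γ} :=
  TopologicalSpace.generateFrom
    { s | ∃ b ∈ BGamma Γ a, s = { z : {z : Node // z ∈ XGamma Γ} | b ∈ Ux Γ a z.1 } }

/-- An ultrafilter on a Boolean subalgebra `B` of `P(ℕ)`. -/
def IsUltrafilterOn (B U : Set (Set ℕ)) : Prop :=
  U ⊆ B ∧
  (∀ s ∈ U, ∀ t ∈ U, s ∩ t ∈ U) ∧
  (∀ s ∈ U, ∀ t ∈ B, s ⊆ t → t ∈ U) ∧
  ∅ ∉ U ∧
  (∀ b ∈ B, Xor' (b ∈ U) (bᶜ ∈ U))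

/-- The length-lexicographic (strict) order on finite binary strings. -/
def LenLexLT (σ τ : Node) : Prop :=
  σ.len < τ.len ∨ (σ.len = τ.len ∧ ∃ i < σ.len, σ.val i = false ∧ τ.val i = true ∧
    ∀ j < i, σ.val j = τ.val j)

/-- `e` is the standard length-lexicographic enumeration of `2^{<ω}`. -/
def IsStdEnum (e : ℕ → Node) : Prop :=
  (∀ k, (e k).len < Ordinal.omega0) ∧
  (∀ σ : Node, σ.len < Ordinal.omega0 → ∃ k, e k = σ) ∧
  (∀ k l : ℕ, k < l → LenLexLT (e k) (e l))

/-- `⋃_{k<n} c^x_k` where `c^x_n = a^x_{e(n)} ∖ ⋃_{k<n} c^x_k` (recursively). -/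
def cUnion (a : Node → Set ℕ) (x : Node) (eb : ℕ → Ordinal) : ℕ → Set ℕ
  | 0 => ∅
  | n + 1 => cUnion a x eb n ∪ (a (x.restrict (eb n + 1)) \ cUnion a x eb n)

/-- `c^x_n = a^x_{e(n)} ∖ ⋃_{k<n} c^x_k`. -/
def cSeq (a : Node → Set ℕ) (x : Node) (eb : ℕ → Ordinal) (n : ℕ) : Set ℕ :=
  a (x.restrict (eb n + 1)) \ cUnion a x eb n

/-- `{x ⌢ σ : σ ∈ 2^{<ω}}`. -/
def appendSet (x : Node) : Set Node :=
  { τ | ∃ σ : Node, σ.len < Ordinal.omega0 ∧ τ = x.append σ }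

/-- The defining equations of the extension `A_Γ[π,x]`:
`a_x = ∅`, `a_{x⌢(σ⌢0)} = ⋃{c^x_k : σ⌢1 ⊆ σ_{π(k)}}`, `a_{x⌢(σ⌢1)} = ℕ ∖ a_{x⌢(σ⌢0)}`. -/
def ExtEquations (e : ℕ → Node) (π : ℕ → ℕ) (a : Node → Set ℕ) (x : Node)
    (eb : ℕ → Ordinal) (a' : Node → Set ℕ) : Prop :=
  a' x = ∅ ∧
  ∀ σ : Node, σ.len < Ordinal.omega0 →
    (a' (x.append (σ.snoc false)) =
      ⋃ k ∈ { k : ℕ | (e (π k)).Extends (σ.snoc true) }, cSeq a x eb k) ∧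
    (a' (x.append (σ.snoc true)) = (a' (x.append (σ.snoc false)))ᶜ)

/-- The full tree `2^{<ω₁}`. -/
def GammaFull : Set Node := { σ | σ.len < omega1 }

theorem natLtOmega1 (n : ℕ) : (n : Ordinal) < omega1 := by
  have h1 : (n : Ordinal) < Ordinal.omega0 := Ordinal.nat_lt_omega0 n
  have h2 : Ordinal.omega0 < omega1 := by
    rw [omega1, ← Cardinal.ord_aleph0]
    exact Cardinal.ord_lt_ord.2 (by rw [← Cardinal.aleph_zero]
                                    exact Cardinal.aleph_lt_aleph.2 zero_lt_one)
  exact h1.trans h2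


/-! ### Auxiliary lemmas -/

theorem omega1_isLimit : Order.IsSuccLimit omega1 :=
  Cardinal.isSuccLimit_ord (by rw [← Cardinal.aleph_zero]; exact Cardinal.aleph_le_aleph.2 zero_le_one)

theorem lt_self_add_one' {a : Ordinal} : a < a + 1 := by
  rw [Ordinal.add_one_eq_succ]; exact Order.lt_succ a

theorem add_one_le_iff' {a b : Ordinal} : a + 1 ≤ b ↔ a < b := by
  rw [Ordinal.add_one_eq_succ]; exact Order.succ_le_iff

theorem lt_add_one_iff' {a b : Ordinal} : a < b + 1 ↔ a ≤ b := by
  rw [Ordinal.add_one_eq_succ]; exact Order.lt_succ_iff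

theorem succ_inj' {a b : Ordinal} (h : a + 1 = b + 1) : a = b :=
  le_antisymm (lt_add_one_iff'.1 (h ▸ lt_self_add_one')) (lt_add_one_iff'.1 (h.symm ▸ lt_self_add_one'))

theorem succ_lt_omega1 {a : Ordinal} (h : a < omega1) : a + 1 < omega1 := by
  rw [Ordinal.add_one_eq_succ]; exact omega1_isLimit.succ_lt h

theorem Node.ext' {x y : Node} (h1 : x.len = y.len) (h2 : ∀ α, x.val α = y.val α) : x = y := by
  cases x with
  | mk l v c =>
    cases y with
    | mk l' v' c' =>
      simp only at h1 h2
      subst h1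
      have hv : v = v' := funext h2
      subst hv
      rfl

theorem Node.dagger_len (σ : Node) : σ.dagger.len = σ.len := by
  unfold Node.dagger; split <;> rfl

theorem Node.dagger_val' {σ : Node} {β : Ordinal} (h : σ.len = β + 1) (α : Ordinal) :
    σ.dagger.val α = if α = β then !(σ.val α) else σ.val α := by
  have hs : IsSucc σ.len := ⟨β, h⟩
  have hc : Classical.choose hs = β := by
    have hspec := Classical.choose_spec hs
    exact (succ_inj' (h.symm.trans hspec)).symm
  unfold Node.dagger
  rw [dif_pos hs]
  show (if α = Classical.choose hs then !(σ.val α) else σ.val α) = _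
  rw [hc]

theorem Node.dagger_snoc (σ : Node) (c : Bool) : (σ.snoc c).dagger = σ.snoc (!c) := by
  apply Node.ext'
  · rw [Node.dagger_len]; rfl
  · intro α
    rw [Node.dagger_val' (β := σ.len) rfl α]
    show (if α = σ.len then !(if α = σ.len then c else σ.val α)
        else (if α = σ.len then c else σ.val α)) = (if α = σ.len then !c else σ.val α)
    by_cases hα : α = σ.len
    · simp [hα]
    · simp [hα]

theorem snoc_mem {Γ : Set Node} (hG : GoodTree Γ) {σ : Node} (hσ : σ ∈ Γ) (b : Bool) :
    σ.snoc b ∈ Γ := by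
  obtain ⟨τ, hτΓ, hlen, hext⟩ := hG.noMax σ hσ
  have h1 : σ.len + 1 ≤ τ.len := add_one_le_iff'.2 hlen
  have hres : τ.restrict (σ.len + 1) ∈ Γ := hG.downward τ hτΓ _ h1
  have heq : τ.restrict (σ.len + 1) = σ.snoc (τ.val σ.len) := by
    apply Node.ext'
    · rfl
    · intro α
      show (if α < σ.len + 1 then τ.val α else false)
          = (if α = σ.len then τ.val σ.len else σ.val α)
      rcases lt_trichotomy α σ.len with h | h | h
      · rw [if_pos (h.trans lt_self_add_one'), if_neg h.ne, hext.2 α h]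
      · subst h; rw [if_pos lt_self_add_one', if_pos rfl]
      · rw [if_neg (not_lt.2 (add_one_le_iff'.2 h)), if_neg h.ne', σ.canon α h.le]
  rw [heq] at hres
  by_cases hb : b = τ.val σ.len
  · rw [hb]; exact hres
  · have hdg : σ.snoc b = (σ.snoc (τ.val σ.len)).dagger := by
      rw [Node.dagger_snoc]
      congr 1
      cases b <;> cases hτ : τ.val σ.len <;> simp_all
    rw [hdg]
    exact hG.twinned _ hres

theorem XGamma_not_succ {Γ : Set Node} (hG : GoodTree Γ) {y : Node} (hy : y ∈ XGamma Γ) :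
    ¬ IsSucc y.len := by
  rintro ⟨β, hβ⟩
  have hβlt : β < y.len := hβ ▸ lt_self_add_one'
  have hres : y.restrict β ∈ Γ := hy.2.2 β hβlt
  have hrepr : y = (y.restrict β).snoc (y.val β) := by
    apply Node.ext'
    · exact hβ
    · intro α
      show y.val α = if α = β then y.val β else (if α < β then y.val α else false)
      rcases lt_trichotomy α β with h | h | h
      · rw [if_neg h.ne, if_pos h]
      · subst h; rw [if_pos rfl]
      · rw [if_neg h.ne', if_neg (not_lt.2 h.le), y.canon α (hβ ▸ add_one_le_iff'.2 h)]
  exact hy.2.1 (hrepr ▸ snoc_mem hG hres (y.val β))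

theorem succ_lt_len {Γ : Set Node} (hG : GoodTree Γ) {y : Node} (hy : y ∈ XGamma Γ)
    {α : Ordinal} (h : α + 1 ≤ y.len) : α + 1 < y.len :=
  lt_of_le_of_ne h (fun he => XGamma_not_succ hG hy ⟨α, he.symm⟩)

theorem finInterCompl_nonempty {Γ : Set Node} {a : Node → Set ℕ} (hT : IsTAlgebra Γ a)
    {y : Node} (hy : y ∈ XGamma Γ) (G : Finset Ordinal) (hG : ∀ α ∈ G, α + 1 ≤ y.len) :
    (finInterCompl a y G).Nonempty := by
  rcases G.eq_empty_or_nonempty with rfl | hne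
  · exact ⟨0, by simp [finInterCompl]⟩
  · set μ := G.max' hne with hμ
    have hμG : μ ∈ G := G.max'_mem hne
    have hμlt : μ + 1 < y.len := succ_lt_len hT.tree hy (hG μ hμG)
    have hβdom : (μ + 1) ∈ branchDomain Γ y :=
      ⟨add_one_le_iff'.2 hμlt, hy.2.2 _ (succ_lt_len hT.tree hy (add_one_le_iff'.2 hμlt))⟩
    have hprop := hT.branch_proper y hy.1 (μ + 1) hβdom G
      (fun γ hγ => lt_of_le_of_lt (G.le_max' γ hγ) lt_self_add_one')
    obtain ⟨p, hp1, hp2⟩ := Set.not_subset.1 hprop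
    refine ⟨p, ?_⟩
    simp only [finInterCompl, Set.mem_iInter, Set.mem_compl_iff]
    intro α hα hpa
    exact hp2 (Set.mem_biUnion hα hpa)

theorem finInterCompl_mono {a : Node → Set ℕ} {y : Node} {F G : Finset Ordinal} (h : F ⊆ G) :
    finInterCompl a y G ⊆ finInterCompl a y F := by
  intro p hp
  simp only [finInterCompl, Set.mem_iInter, Set.mem_compl_iff] at hp ⊢
  exact fun α hα => hp α (h hα)

theorem not_both_mem_Ux {Γ : Set Node} {a : Node → Set ℕ} (hT : IsTAlgebra Γ a)
    {y : Node} (hy : y ∈ XGamma Γ) {b : Set ℕ}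
    (h1 : b ∈ Ux Γ a y) (h2 : bᶜ ∈ Ux Γ a y) : False := by
  obtain ⟨-, F1, hF1, hs1⟩ := h1
  obtain ⟨-, F2, hF2, hs2⟩ := h2
  obtain ⟨p, hp⟩ := finInterCompl_nonempty hT hy (F1 ∪ F2)
    (fun α hα => (Finset.mem_union.1 hα).elim (hF1 α) (hF2 α))
  exact hs2 (finInterCompl_mono Finset.subset_union_right hp)
    (hs1 (finInterCompl_mono Finset.subset_union_left hp))

theorem self_mem_hatA (f : Ordinal → Set ℕ) (β : Ordinal) : β ∈ hatA f β :=
  ⟨le_rfl, ∅, by simp, by simp [unionFin]⟩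

theorem split_lemma {Γ : Set Node} {y z : Node}
    (hy : y ∈ XGamma Γ) (hz : z ∈ XGamma Γ) (hzlen : z.len = omega1) (hne : y ≠ z) :
    ∃ δ : Ordinal, δ + 1 ≤ y.len ∧ δ < omega1 ∧
      (∀ ξ, ξ < δ → y.restrict (ξ + 1) = z.restrict (ξ + 1)) ∧
      y.restrict (δ + 1) = (z.restrict (δ + 1)).dagger := by
  have hylen : y.len ≤ omega1 := hy.1
  have hPne : {α : Ordinal | y.val α ≠ z.val α}.Nonempty := by
    by_contra hP
    rw [Set.not_nonempty_iff_eq_empty] at hP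
    have hveq : ∀ α, y.val α = z.val α := by
      intro α
      by_contra hc
      exact (Set.eq_empty_iff_forall_notMem.1 hP α) hc
    rcases lt_or_eq_of_le hylen with hl | he
    · refine hy.2.1 ?_
      have hrepr : y = z.restrict y.len := by
        refine Node.ext' rfl fun α => ?_
        show y.val α = if α < y.len then z.val α else false
        by_cases hα : α < y.len
        · rw [if_pos hα, hveq α]
        · rw [if_neg hα, y.canon α (not_lt.1 hα)]
      rw [hrepr]
      exact hz.2.2 y.len (by rw [hzlen]; exact hl)
    · exact hne (Node.ext' (he.trans hzlen.symm) hveq)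
  set δ := Ordinal.lt_wf.min _ hPne with hδdef
  have hδP : y.val δ ≠ z.val δ := Ordinal.lt_wf.min_mem _ hPne
  have hmin : ∀ α, α < δ → y.val α = z.val α := by
    intro α hα
    by_contra hc
    exact Ordinal.lt_wf.not_lt_min _ hc hα
  have hδy : δ < y.len := by
    by_contra hge
    have hge : y.len ≤ δ := not_lt.1 hge
    rcases lt_or_eq_of_le hylen with hl | he
    · refine hy.2.1 ?_
      have hrepr : y = z.restrict y.len := by
        refine Node.ext' rfl fun α => ?_
        show y.val α = if α < y.len then z.val α else false
        by_cases hα : α < y.len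
        · rw [if_pos hα, hmin α (hα.trans_le hge)]
        · rw [if_neg hα, y.canon α (not_lt.1 hα)]
      rw [hrepr]
      exact hz.2.2 y.len (by rw [hzlen]; exact hl)
    · exact hδP (by rw [y.canon δ hge, z.canon δ (by rw [hzlen, ← he]; exact hge)])
  refine ⟨δ, add_one_le_iff'.2 hδy, lt_of_lt_of_le hδy hylen, ?_, ?_⟩
  · intro ξ hξ
    refine Node.ext' rfl fun α => ?_
    show (if α < ξ + 1 then y.val α else false) = (if α < ξ + 1 then z.val α else false)
    by_cases hα : α < ξ + 1
    · rw [if_pos hα, if_pos hα, hmin α (lt_of_le_of_lt (lt_add_one_iff'.1 hα) hξ)]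
    · rw [if_neg hα, if_neg hα]
  · apply Node.ext'
    · rw [Node.dagger_len]; rfl
    · intro α
      rw [Node.dagger_val' (β := δ) rfl α]
      show (if α < δ + 1 then y.val α else false)
          = if α = δ then !(if α < δ + 1 then z.val α else false)
            else (if α < δ + 1 then z.val α else false)
      rcases lt_trichotomy α δ with h | h | h
      · rw [if_pos (h.trans lt_self_add_one'), if_neg h.ne, if_pos (h.trans lt_self_add_one'),
          hmin α h]
      · rw [h, if_pos lt_self_add_one', if_pos rfl, if_pos lt_self_add_one']
        revert hδP
        cases y.val δ <;> cases z.val δ <;> simp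
      · rw [if_neg (not_lt.2 (add_one_le_iff'.2 h)), if_neg h.ne',
          if_neg (not_lt.2 (add_one_le_iff'.2 h))]

theorem mem_Ux_of_hat {Γ : Set Node} {a : Node → Set ℕ} (hT : IsTAlgebra Γ a)
    {y zz : Node} (hy : y ∈ XGamma Γ) (hzz : zz ∈ XGamma Γ) (hzlen : zz.len = omega1)
    {δ γ : Ordinal} (hδ1 : δ + 1 ≤ y.len) (hδω : δ < omega1) (hγω : γ < omega1)
    (hres : ∀ ξ, ξ < δ → y.restrict (ξ + 1) = zz.restrict (ξ + 1))
    (hdag : y.restrict (δ + 1) = (zz.restrict (δ + 1)).dagger)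
    (hhat : δ ∈ hatA (branchSeq a zz) γ) :
    a (zz.restrict (γ + 1)) ∈ Ux Γ a y := by
  obtain ⟨hδγ, F', hF'lt, hF'cov⟩ := hhat
  have hzzres : ∀ β, β < omega1 → zz.restrict β ∈ Γ := fun β hβ =>
    hzz.2.2 β (by rw [hzlen]; exact hβ)
  refine ⟨GenBool.basic _ ⟨_, hzzres _ (succ_lt_omega1 hγω), rfl⟩, insert δ F', ?_, ?_⟩
  · intro α hα
    rcases Finset.mem_insert.1 hα with rfl | hα
    · exact hδ1
    · exact le_trans (add_one_le_iff'.2 ((hF'lt α hα).trans lt_self_add_one')) hδ1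
  · intro p hp
    simp only [finInterCompl, Set.mem_iInter, Set.mem_compl_iff, Finset.mem_insert] at hp
    have hδc : a (y.restrict (δ + 1)) = (a (zz.restrict (δ + 1)))ᶜ := by
      rw [hdag]
      exact hT.compl_dagger _ (hzzres _ (succ_lt_omega1 hδω)) ⟨δ, rfl⟩
    have hp1 : p ∈ a (zz.restrict (δ + 1)) := by
      have h0 := hp δ (Or.inl rfl)
      rw [hδc] at h0
      simpa using h0
    by_contra hpb
    have hcov := hF'cov ⟨hp1, hpb⟩
    simp only [unionFin, Set.mem_iUnion, exists_prop] at hcov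
    obtain ⟨ξ, hξF, hpξ⟩ := hcov
    have h2 := hp ξ (Or.inr hξF)
    rw [hres ξ (hF'lt ξ hξF)] at h2
    exact h2 hpξ

theorem eventually_mem_Ux {Γ : Set Node} {a : Node → Set ℕ}
    {u : ℕ → {z : Node // z ∈ XGamma Γ}} {z : {z : Node // z ∈ XGamma Γ}}
    (hconv : Filter.Tendsto u Filter.atTop (@nhds _ (stoneTop Γ a) z))
    {b : Set ℕ} (hbB : b ∈ BGamma Γ a) (hbz : b ∈ Ux Γ a z.1) :
    ∃ N, ∀ n ≥ N, b ∈ Ux Γ a (u n).1 := by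
  letI : TopologicalSpace {z : Node // z ∈ XGamma Γ} := stoneTop Γ a
  have hopen : IsOpen {w : {z : Node // z ∈ XGamma Γ} | b ∈ Ux Γ a w.1} :=
    TopologicalSpace.isOpen_generateFrom_of_mem ⟨b, hbB, rfl⟩
  have hnb : {w : {z : Node // z ∈ XGamma Γ} | b ∈ Ux Γ a w.1} ∈ nhds z :=
    hopen.mem_nhds hbz
  have hmem := Filter.mem_map.1 (hconv hnb)
  obtain ⟨N, hN⟩ := Filter.mem_atTop_sets.1 hmem
  exact ⟨N, fun n hn => hN n hn⟩

theorem exists_mem_clubs (C : ℕ → Set Ordinal) (h : ∀ m, IsClubOmega1 (C m)) :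
    ∃ δ, δ < omega1 ∧ ∀ m, δ ∈ C m := by
  classical
  have H : ∀ (m : ℕ) (α : Ordinal), α < omega1 → ∃ β, β ∈ C m ∧ α < β ∧ β < omega1 := by
    intro m α hα
    obtain ⟨β, hβC, hβ⟩ := (h m).2.1 (α + 1) (succ_lt_omega1 hα)
    exact ⟨β, hβC, lt_of_lt_of_le lt_self_add_one' hβ, (h m).1 hβC⟩
  let pick : ℕ → Ordinal → Ordinal := fun m α =>
    if hα : α < omega1 then (H m α hα).choose else 0
  have hpick : ∀ m α, (hα : α < omega1) →
      pick m α ∈ C m ∧ α < pick m α ∧ pick m α < omega1 := by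
    intro m α hα
    simp only [pick, dif_pos hα]
    exact (H m α hα).choose_spec
  let g : ℕ → Ordinal := fun j =>
    Nat.rec 0 (fun j ih => (Finset.range (j + 1)).sup (fun m => pick m ih)) j
  have hgsucc : ∀ j, g (j + 1) = (Finset.range (j + 1)).sup (fun m => pick m (g j)) :=
    fun _ => rfl
  have hglt : ∀ j, g j < omega1 := by
    intro j
    induction j with
    | zero => exact omega1_isLimit.pos
    | succ j ih =>
      rw [hgsucc]
      have hbot : (⊥ : Ordinal) < omega1 := by
        rw [Ordinal.bot_eq_zero]; exact omega1_isLimit.pos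
      rw [Finset.sup_lt_iff hbot]
      exact fun m _ => (hpick m (g j) ih).2.2
  have hstep : ∀ j m, m ≤ j → g j < pick m (g j) ∧ pick m (g j) ≤ g (j + 1) := by
    intro j m hm
    refine ⟨(hpick m (g j) (hglt j)).2.1, ?_⟩
    rw [hgsucc]
    exact Finset.le_sup (f := fun m => pick m (g j)) (Finset.mem_range.2 (Nat.lt_succ_of_le hm))
  have hmono : StrictMono g := strictMono_nat_of_lt_succ (fun j =>
    lt_of_lt_of_le (hstep j 0 (Nat.zero_le j)).1 (hstep j 0 (Nat.zero_le j)).2)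
  have hle : ∀ j, g j ≤ ⨆ j, g j := fun j => le_ciSup (Ordinal.bddAbove_range g) j
  have hδω : (⨆ j, g j) < omega1 := by
    show (⨆ j, g j) < (Cardinal.aleph 1).ord
    apply Cardinal.iSup_lt_ord_lift_of_isRegular Cardinal.isRegular_aleph_one
    · rw [Cardinal.mk_nat, Cardinal.lift_aleph0]; exact Cardinal.aleph0_lt_aleph_one
    · exact hglt
  refine ⟨⨆ j, g j, hδω, fun m => ?_⟩
  refine (h m).2.2 _ hδω ?_ ?_
  · have h01 : (0 : Ordinal) < g 1 := hmono Nat.zero_lt_one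
    exact ne_of_gt (lt_of_lt_of_le h01 (hle 1))
  · intro α hα
    have hex : ∃ j, α < g j := by
      by_contra hc
      push_neg at hc
      exact absurd hα (not_lt.2 (ciSup_le hc))
    obtain ⟨j, hj⟩ := hex
    refine ⟨pick m (g (max j m)), (hpick m (g (max j m)) (hglt _)).1, ?_, ?_⟩
    · exact lt_of_lt_of_le hj (hmono.monotone (le_max_left j m)) |>.trans
        (hstep (max j m) m (le_max_right j m)).1
    · exact lt_of_le_of_lt (hstep (max j m) m (le_max_right j m)).2
        (lt_of_lt_of_le (hmono (Nat.lt_succ_self (max j m + 1))) (hle (max j m + 2)))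

/-- If a `𝕋`-algebra has the ScP, then any injective sequence in `X(Γ)` converging
in the Stone topology converges to a point of `X(Γ,ℵ₀)`, i.e. of countable length. -/
theorem stmt7 (Γ : Set Node) (a : Node → Set ℕ) (hT : IsTAlgebra Γ a)
    (hScP : ∀ x : Node, x.len = omega1 → HasScP (branchDomain Γ x) (branchSeq a x))
    (u : ℕ → {z : Node // z ∈ XGamma Γ}) (hinj : Function.Injective u)
    (z : {z : Node // z ∈ XGamma Γ})
    (hconv : Filter.Tendsto u Filter.atTop (@nhds _ (stoneTop Γ a) z)) :
    z.1.len < omega1 := by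
  classical
  by_contra hlt
  have hzlen : z.1.len = omega1 := le_antisymm z.2.1 (not_lt.1 hlt)
  have hzres : ∀ β, β < omega1 → z.1.restrict β ∈ Γ := fun β hβ =>
    z.2.2.2 β (by rw [hzlen]; exact hβ)
  have hev : ∀ γ : Ordinal, γ < omega1 → ∃ N, ∀ n ≥ N,
      (a (z.1.restrict (γ + 1)))ᶜ ∈ Ux Γ a (u n).1 := by
    intro γ hγ
    have hbB : (a (z.1.restrict (γ + 1)))ᶜ ∈ BGamma Γ a :=
      GenBool.compl _ (GenBool.basic _ ⟨_, hzres _ (succ_lt_omega1 hγ), rfl⟩)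
    have hbz : (a (z.1.restrict (γ + 1)))ᶜ ∈ Ux Γ a z.1 := by
      refine ⟨hbB, {γ}, ?_, ?_⟩
      · intro α hα
        rw [Finset.mem_singleton] at hα
        subst hα
        rw [hzlen]
        exact (succ_lt_omega1 hγ).le
      · intro p hp
        simp only [finInterCompl, Finset.mem_singleton, Set.mem_iInter,
          Set.mem_compl_iff] at hp
        exact hp γ rfl
    exact eventually_mem_Ux hconv hbB hbz
  choose Nf hNf using hev
  have hstat : ∃ m : ℕ, IsStationaryOmega1 {γ | ∃ h : γ < omega1, Nf γ h ≤ m} := by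
    by_contra hc
    push_neg at hc
    have hclub : ∀ m : ℕ, ∃ C, IsClubOmega1 C ∧
        {γ | ∃ h : γ < omega1, Nf γ h ≤ m} ∩ C = ∅ := by
      intro m
      have hm := hc m
      unfold IsStationaryOmega1 at hm
      push_neg at hm
      obtain ⟨C, hC, hne⟩ := hm
      exact ⟨C, hC, hne⟩
    choose C hC hCe using hclub
    obtain ⟨δ, hδω, hδC⟩ := exists_mem_clubs C hC
    have hmem : δ ∈ {γ | ∃ h : γ < omega1, Nf γ h ≤ Nf δ hδω} ∩ C (Nf δ hδω) :=
      ⟨⟨hδω, le_rfl⟩, hδC _⟩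
    rw [hCe] at hmem
    exact absurd hmem (Set.notMem_empty δ)
  obtain ⟨m, hmstat⟩ := hstat
  have hSsub : {γ | ∃ h : γ < omega1, Nf γ h ≤ m} ⊆ Iio omega1 := by
    rintro γ ⟨h, -⟩
    exact h
  have hdom : Iio omega1 ⊆ branchDomain Γ z.1 := fun α hα =>
    ⟨by rw [hzlen]; exact (succ_lt_omega1 hα).le, hzres _ (succ_lt_omega1 hα)⟩
  obtain ⟨F, hF⟩ := hScP z.1 hzlen hdom _ hSsub hmstat
  set M : ℕ := max m (F.sup (fun γ => if h : γ < omega1 then Nf γ h else 0)) with hMdef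
  obtain ⟨n, hnM, hune⟩ : ∃ n, M ≤ n ∧ u n ≠ z := by
    rcases eq_or_ne (u M) z with he | hne0
    · exact ⟨M + 1, Nat.le_succ M, fun hc => Nat.succ_ne_self M (hinj (hc.trans he.symm))⟩
    · exact ⟨M, le_rfl, hne0⟩
  have hy : (u n).1 ∈ XGamma Γ := (u n).2
  have hyne : (u n).1 ≠ z.1 := fun h => hune (Subtype.ext h)
  obtain ⟨δ, hδ1, hδω, hres, hdag⟩ := split_lemma hy z.2 hzlen hyne
  have hδmem : δ ∈ ⋃ γ ∈ {γ | ∃ h : γ < omega1, Nf γ h ≤ m} ∪ (↑F : Set Ordinal),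
      hatA (branchSeq a z.1) γ := by
    rw [hF]
    exact hδω
  simp only [Set.mem_iUnion, exists_prop] at hδmem
  obtain ⟨γ, hγSF, hδhat⟩ := hδmem
  have hγω : γ < omega1 := by
    have hself : γ ∈ ⋃ γ' ∈ {γ | ∃ h : γ < omega1, Nf γ h ≤ m} ∪ (↑F : Set Ordinal),
        hatA (branchSeq a z.1) γ' := by
      simp only [Set.mem_iUnion, exists_prop]
      exact ⟨γ, hγSF, self_mem_hatA _ γ⟩
    rw [hF] at hself
    exact hself
  have hpos : a (z.1.restrict (γ + 1)) ∈ Ux Γ a (u n).1 :=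
    mem_Ux_of_hat hT hy z.2 hzlen hδ1 hδω hγω hres hdag hδhat
  have hNle : Nf γ hγω ≤ n := by
    rcases hγSF with hγS | hγF
    · obtain ⟨h', hle'⟩ := hγS
      exact le_trans hle' (le_trans (le_max_left _ _) hnM)
    · have hsup : (if h : γ < omega1 then Nf γ h else 0) ≤
          F.sup (fun γ => if h : γ < omega1 then Nf γ h else 0) :=
        Finset.le_sup (f := fun γ => if h : γ < omega1 then Nf γ h else 0)
          (Finset.mem_coe.1 hγF)
      rw [dif_pos hγω] at hsup
      exact le_trans hsup (le_trans (le_max_right _ _) hnM)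
  exact not_both_mem_Ux hT hy hpos (hNf γ hγω n hNle)


end
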